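/- Let k₁, k₂ > 0, let 0 ≤ ρ < 1, and let θ be a real number with 0 < θ ≤ 4π²(1−ρ)/(k₁k₂). Then Σ_{n₁=1}^{∞} Σ_{n₂=1}^{∞} (n₁ n₂)^{−1} · exp( −4π² ( (1/2)(n₁/k₁)² + (1/2)(n₂/k₂)² − ρ n₁ n₂/(k₁ k₂) ) ) ≤ ( (k₁ k₂)^θ θ^θ ) / ( (2π)^{2θ} e^θ (1−ρ)^θ ) · ( Σ_{n=1}^{∞} n^{−(θ+1)} )², where the series Σ n^{−(θ+1)} converges (to ζ(θ+1)) since θ > 0. -/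

import Mathlib

open Real

/-- For `k₁, k₂ > 0`, `0 ≤ ρ < 1` and `0 < θ ≤ 4π²(1−ρ)/(k₁k₂)`, the double
Gaussian-tail series is bounded by a squared Riemann-zeta type series. -/
theorem stmt_12 (k₁ k₂ ρ θ : ℝ) (hk₁ : 0 < k₁) (hk₂ : 0 < k₂) (hρ0 : 0 ≤ ρ) (hρ1 : ρ < 1)
    (hθ0 : 0 < θ) (hθ : θ ≤ 4 * Real.pi ^ 2 * (1 - ρ) / (k₁ * k₂)) :
    (∑' (n₁ : ℕ) (n₂ : ℕ), (((n₁ : ℝ) + 1) * ((n₂ : ℝ) + 1))⁻¹ *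
        Real.exp (-(4 * Real.pi ^ 2) *
          ((1 / 2) * (((n₁ : ℝ) + 1) / k₁) ^ 2 + (1 / 2) * (((n₂ : ℝ) + 1) / k₂) ^ 2 -
            ρ * ((n₁ : ℝ) + 1) * ((n₂ : ℝ) + 1) / (k₁ * k₂)))) ≤
      (k₁ * k₂) ^ θ * θ ^ θ / ((2 * Real.pi) ^ (2 * θ) * Real.exp θ * (1 - ρ) ^ θ) *
        (∑' n : ℕ, ((n : ℝ) + 1) ^ (-(θ + 1))) ^ 2 := by
  have hπ := Real.pi_pos
  have hρ : (0:ℝ) < 1 - ρ := by linarith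
  set A : ℝ := 4 * Real.pi ^ 2 * (1 - ρ) / (k₁ * k₂) with hA
  have hApos : 0 < A := by
    apply div_pos _ (mul_pos hk₁ hk₂); positivity
  set f : ℕ → ℝ := fun n => ((n : ℝ) + 1) ^ (-(θ + 1)) with hfdef
  set C : ℝ := θ ^ θ * Real.exp (-θ) * A ^ (-θ) with hCdef
  set g : ℕ → ℕ → ℝ := fun n₁ n₂ => (((n₁ : ℝ) + 1) * ((n₂ : ℝ) + 1))⁻¹ *
        Real.exp (-(4 * Real.pi ^ 2) *
          ((1 / 2) * (((n₁ : ℝ) + 1) / k₁) ^ 2 + (1 / 2) * (((n₂ : ℝ) + 1) / k₂) ^ 2 -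
            ρ * ((n₁ : ℝ) + 1) * ((n₂ : ℝ) + 1) / (k₁ * k₂))) with hgdef
  -- key exp bound
  have key : ∀ t : ℝ, 0 < t → Real.exp (-t) ≤ θ ^ θ * Real.exp (-θ) * t ^ (-θ) := by
    intro t ht
    have hlog : Real.log (t / θ) ≤ t / θ - 1 := Real.log_le_sub_one_of_pos (by positivity)
    rw [Real.log_div ht.ne' hθ0.ne'] at hlog
    have h2 : θ * (Real.log t - Real.log θ) ≤ θ * (t / θ - 1) :=
      mul_le_mul_of_nonneg_left hlog hθ0.le
    have h3 : θ * (t / θ - 1) = t - θ := by field_simp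
    rw [Real.rpow_def_of_pos hθ0, Real.rpow_def_of_pos ht, ← Real.exp_add, ← Real.exp_add]
    rw [Real.exp_le_exp]
    rw [mul_sub] at h2
    rw [h3] at h2
    nlinarith
  -- summability of f
  have hf : Summable f := by
    have h1 : Summable (fun n : ℕ => ((n : ℝ)) ^ (-(θ + 1))) :=
      Real.summable_nat_rpow.mpr (by linarith)
    have h2 := (summable_nat_add_iff 1).mpr h1
    apply h2.congr
    intro n
    push_cast
    ring_nf
    simp only [hfdef]; ring_nf
  have hfpos : ∀ n : ℕ, 0 < f n := fun n => by
    have : (0:ℝ) < (n : ℝ) + 1 := by positivity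
    exact Real.rpow_pos_of_pos this _
  set S : ℝ := ∑' n, f n with hSdef
  have hSnn : 0 ≤ S := tsum_nonneg fun n => (hfpos n).le
  -- pointwise bound
  have hpt : ∀ n₁ n₂ : ℕ, g n₁ n₂ ≤ C * f n₁ * f n₂ := by
    intro n₁ n₂
    set a : ℝ := (n₁ : ℝ) + 1 with hadef
    set b : ℝ := (n₂ : ℝ) + 1 with hbdef
    have ha : (0:ℝ) < a := by positivity
    have hb : (0:ℝ) < b := by positivity
    have hE : (1/2) * (a/k₁)^2 + (1/2) * (b/k₂)^2 - ρ*a*b/(k₁*k₂)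
        = (1/2) * (a/k₁ - b/k₂)^2 + (1-ρ)*(a*b)/(k₁*k₂) := by
      field_simp; ring
    have hmono : -(4*Real.pi^2) * ((1/2) * (a/k₁)^2 + (1/2) * (b/k₂)^2 - ρ*a*b/(k₁*k₂))
        ≤ -(A * a * b) := by
      rw [hE, hA]
      have h0 : (0:ℝ) ≤ 4 * Real.pi ^ 2 * (1/2 * (a/k₁ - b/k₂)^2) := by positivity
      have hle : 4*Real.pi^2*(1-ρ)/(k₁*k₂)*a*b
          ≤ 4*Real.pi^2 * (1/2*(a/k₁-b/k₂)^2 + (1-ρ)*(a*b)/(k₁*k₂)) := by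
        have hdiff : 4*Real.pi^2 * (1/2*(a/k₁-b/k₂)^2 + (1-ρ)*(a*b)/(k₁*k₂))
            - 4*Real.pi^2*(1-ρ)/(k₁*k₂)*a*b = 4 * Real.pi ^ 2 * (1/2 * (a/k₁ - b/k₂)^2) := by
          ring
        linarith [h0, hdiff]
      rw [show -(4*Real.pi^2) * (1/2*(a/k₁-b/k₂)^2 + (1-ρ)*(a*b)/(k₁*k₂))
          = -(4*Real.pi^2 * (1/2*(a/k₁-b/k₂)^2 + (1-ρ)*(a*b)/(k₁*k₂))) by ring]
      exact neg_le_neg hle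
    have habpos : 0 < A * a * b := by positivity
    have h1 : g n₁ n₂ ≤ (a*b)⁻¹ * (θ ^ θ * Real.exp (-θ) * (A*a*b) ^ (-θ)) := by
      have := le_trans (Real.exp_le_exp.mpr hmono) (key _ habpos)
      have hab : (0:ℝ) < (a*b)⁻¹ := by positivity
      calc g n₁ n₂ = (a*b)⁻¹ * Real.exp (-(4*Real.pi^2) * ((1/2) * (a/k₁)^2 + (1/2) * (b/k₂)^2 - ρ*a*b/(k₁*k₂))) := rfl
        _ ≤ _ := mul_le_mul_of_nonneg_left this hab.le
    refine h1.trans_eq ?_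
    have hsplit : (A*a*b) ^ (-θ) = A ^ (-θ) * a ^ (-θ) * b ^ (-θ) := by
      rw [Real.mul_rpow (by positivity) hb.le, Real.mul_rpow hApos.le ha.le]
    have hfa : f n₁ = a ^ (-θ) * a⁻¹ := by
      rw [hfdef]
      show a ^ (-(θ+1)) = a ^ (-θ) * a⁻¹
      rw [show -(θ+1) = -θ + (-1) by ring, Real.rpow_add ha, Real.rpow_neg_one]
    have hfb : f n₂ = b ^ (-θ) * b⁻¹ := by
      rw [hfdef]
      show b ^ (-(θ+1)) = b ^ (-θ) * b⁻¹
      rw [show -(θ+1) = -θ + (-1) by ring, Real.rpow_add hb, Real.rpow_neg_one]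
    rw [hsplit, hfa, hfb, hCdef, mul_inv]
    ring
  have hgnn : ∀ n₁ n₂ : ℕ, 0 ≤ g n₁ n₂ := by
    intro n₁ n₂
    have : (0:ℝ) < ((n₁ : ℝ) + 1) * ((n₂ : ℝ) + 1) := by positivity
    exact mul_nonneg (by positivity) (Real.exp_pos _).le
  have hCnn : 0 ≤ C := by
    rw [hCdef]
    have := Real.rpow_nonneg hθ0.le θ
    positivity
  -- inner sums
  have hinner_sum : ∀ n₁ : ℕ, Summable (fun n₂ => g n₁ n₂) := by
    intro n₁
    apply Summable.of_nonneg_of_le (hgnn n₁) (hpt n₁)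
    exact hf.mul_left _
  have hinner : ∀ n₁ : ℕ, (∑' n₂, g n₁ n₂) ≤ C * f n₁ * S := by
    intro n₁
    calc (∑' n₂, g n₁ n₂) ≤ ∑' n₂, C * f n₁ * f n₂ :=
          Summable.tsum_le_tsum (hpt n₁) (hinner_sum n₁) (hf.mul_left _)
      _ = C * f n₁ * S := by rw [tsum_mul_left]
  have houter_sum : Summable (fun n₁ => ∑' n₂, g n₁ n₂) := by
    apply Summable.of_nonneg_of_le (fun n₁ => tsum_nonneg (fun n₂ => hgnn n₁ n₂)) hinner
    exact (hf.mul_left C).mul_right S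
  have hmain : (∑' n₁, ∑' n₂, g n₁ n₂) ≤ C * S * S := by
    calc (∑' n₁, ∑' n₂, g n₁ n₂) ≤ ∑' n₁, C * f n₁ * S :=
          Summable.tsum_le_tsum hinner houter_sum ((hf.mul_left C).mul_right S)
      _ = C * S * S := by
          rw [show (fun n₁ => C * f n₁ * S) = fun n₁ => (C * S) * f n₁ by funext n; ring]
          rw [tsum_mul_left]
  -- constant equality
  have h2π : (2 * Real.pi) ^ (2 * θ) = (4 * Real.pi ^ 2) ^ θ := by
    have hb : (4 * Real.pi ^ 2) = (2 * Real.pi) ^ (2:ℝ) := by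
      rw [show ((2:ℝ)) = ((2:ℕ):ℝ) by norm_num, Real.rpow_natCast]; ring
    rw [hb, ← Real.rpow_mul (by positivity)]
  have hCeq : (k₁ * k₂) ^ θ * θ ^ θ / ((2 * Real.pi) ^ (2 * θ) * Real.exp θ * (1 - ρ) ^ θ) = C := by
    rw [h2π, hCdef, hA, Real.exp_neg, Real.rpow_neg hApos.le,
      Real.div_rpow (by positivity) (mul_pos hk₁ hk₂).le,
      Real.mul_rpow (by positivity) hρ.le]
    have h4 : (0:ℝ) < (4 * Real.pi ^ 2) ^ θ := Real.rpow_pos_of_pos (by positivity) θ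
    have hkk : (0:ℝ) < (k₁ * k₂) ^ θ := Real.rpow_pos_of_pos (mul_pos hk₁ hk₂) θ
    have hρθ : (0:ℝ) < (1 - ρ) ^ θ := Real.rpow_pos_of_pos hρ θ
    have he : (0:ℝ) < Real.exp θ := Real.exp_pos θ
    field_simp
  calc (∑' (n₁ : ℕ) (n₂ : ℕ), g n₁ n₂) ≤ C * S * S := hmain
    _ = (k₁ * k₂) ^ θ * θ ^ θ / ((2 * Real.pi) ^ (2 * θ) * Real.exp θ * (1 - ρ) ^ θ) * S ^ 2 := by
        rw [hCeq]; ring
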